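/- Define integers Eu_M for loopless matroids M by the recursion Eu_∅ = 1 and Eu_M = Σ_{F flat, F ≠ ∅} c_{M^F} · Eu_{M_F}, where c_N = −2^{rk N} χ_N(1/2). Then Eu_M = χ_M(2) for every loopless matroid M. -/

import Mathlib

open scoped Matroid

variable {α : Type*}

/-- The rank of a set in a matroid: the maximum size of an independent subset of the set. -/
noncomputable def Matroid.rkSet (M : Matroid α) (S : Set α) : ℕ :=
  ⨆ I : {I : Set α // M.Indep I ∧ I ⊆ S}, I.1.ncard

/-- The rank of a matroid: the rank of its ground set. -/
noncomputable def Matroid.rank (M : Matroid α) : ℕ := M.rkSet M.E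

/-- Deletion of a set from a matroid. -/
noncomputable def Matroid.del (M : Matroid α) (D : Set α) : Matroid α := M ↾ (M.E \ D)

/-- Contraction of a matroid by a set, defined via duality: `M / C = (M✶ \ C)✶`. -/
noncomputable def Matroid.con (M : Matroid α) (C : Set α) : Matroid α := (M✶.del C)✶

/-- A matroid is loopless if every singleton of the ground set is independent. -/
def Matroid.IsLoopless (M : Matroid α) : Prop := ∀ e ∈ M.E, M.Indep {e}

/-- A matroid is simple if every (at most two-element) subset `{e, f}` of the ground set is
independent. -/
def Matroid.IsSimple (M : Matroid α) : Prop := ∀ e ∈ M.E, ∀ f ∈ M.E, M.Indep {e, f}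

/-- The characteristic polynomial of a matroid, as a function of `t`, given by the
Whitney rank-generating-function formula `χ_M(t) = ∑_{S ⊆ E} (-1)^|S| t^(rk M - rk S)`
(which agrees with the Möbius-function definition for loopless matroids). -/
noncomputable def Matroid.charPoly (M : Matroid α) (t : ℚ) : ℚ :=
  ∑ᶠ (S : Set α) (_ : S ⊆ M.E), (-1 : ℚ) ^ S.ncard * t ^ (M.rank - M.rkSet S)

/-- The beta invariant of a matroid, via Crapo's formula
`β(M) = (-1)^(rk M) ∑_{S ⊆ E} (-1)^|S| rk S`. -/
noncomputable def Matroid.betaInv (M : Matroid α) : ℚ :=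
  (-1 : ℚ) ^ M.rank * ∑ᶠ (S : Set α) (_ : S ⊆ M.E), (-1 : ℚ) ^ S.ncard * (M.rkSet S : ℚ)

/-- The invariant `c_M = -2^(rk M) · χ_M(1/2)`. -/
noncomputable def Matroid.cInv (M : Matroid α) : ℚ :=
  - 2 ^ M.rank * M.charPoly (1/2)


section CoreCombinatorics
open Finset
variable [DecidableEq α]

lemma sum_pow_neg_one (E : Finset α) :
    ∑ S ∈ E.powerset, (-1 : ℚ) ^ S.card = if E = ∅ then 1 else 0 := by
  have h := Finset.sum_powerset_neg_one_pow_card (x := E)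
  calc ∑ S ∈ E.powerset, (-1 : ℚ) ^ S.card
      = ((∑ S ∈ E.powerset, (-1 : ℤ) ^ S.card : ℤ) : ℚ) := by push_cast; rfl
    _ = if E = ∅ then 1 else 0 := by rw [h]; split <;> norm_num

lemma swap_union (E : Finset α) (h : Finset α → Finset α → ℚ) :
    ∑ F ∈ E.powerset, ∑ T ∈ (E \ F).powerset, h F T
      = ∑ U ∈ E.powerset, ∑ F ∈ U.powerset, h F (U \ F) := by
  rw [Finset.sum_sigma', Finset.sum_sigma']
  refine Finset.sum_nbij' (fun p => ⟨p.1 ∪ p.2, p.1⟩) (fun p => ⟨p.2, p.1 \ p.2⟩)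
    ?_ ?_ ?_ ?_ ?_
  · rintro ⟨F, T⟩ hp
    simp only [Finset.mem_sigma, Finset.mem_powerset] at hp ⊢
    exact ⟨Finset.union_subset hp.1 (hp.2.trans (Finset.sdiff_subset)), Finset.subset_union_left⟩
  · rintro ⟨U, F⟩ hp
    simp only [Finset.mem_sigma, Finset.mem_powerset] at hp ⊢
    exact ⟨hp.2.trans hp.1, Finset.sdiff_subset_sdiff hp.1 (Finset.Subset.refl F)⟩
  · rintro ⟨F, T⟩ hp
    simp only [Finset.mem_sigma, Finset.mem_powerset] at hp
    have hdisj : Disjoint F T := Finset.disjoint_left.mpr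
      (fun a haF haT => (Finset.mem_sdiff.mp (hp.2 haT)).2 haF)
    simp [Finset.union_sdiff_cancel_left hdisj]
  · rintro ⟨U, F⟩ hp
    simp only [Finset.mem_sigma, Finset.mem_powerset] at hp
    simp [Finset.union_sdiff_of_subset hp.2]
  · rintro ⟨F, T⟩ hp
    simp only [Finset.mem_sigma, Finset.mem_powerset] at hp
    have hdisj : Disjoint F T := Finset.disjoint_left.mpr
      (fun a haF haT => (Finset.mem_sdiff.mp (hp.2 haT)).2 haF)
    rw [Finset.union_sdiff_cancel_left hdisj]

lemma interval_sign_sum (U S : Finset α) (hS : S ⊆ U) :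
    ∑ F ∈ U.powerset.filter (S ⊆ ·), (-1 : ℚ) ^ (U \ F).card
      = if S = U then 1 else 0 := by
  have hbij : ∑ F ∈ U.powerset.filter (S ⊆ ·), (-1 : ℚ) ^ (U \ F).card
      = ∑ V ∈ (U \ S).powerset, (-1 : ℚ) ^ V.card := by
    refine Finset.sum_nbij' (fun F => U \ F) (fun V => U \ V) ?_ ?_ ?_ ?_ ?_
    · intro F hF
      simp only [Finset.mem_filter, Finset.mem_powerset] at hF ⊢
      exact Finset.sdiff_subset_sdiff (Finset.Subset.refl U) hF.2
    · intro V hV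
      simp only [Finset.mem_filter, Finset.mem_powerset] at hV ⊢
      exact ⟨Finset.sdiff_subset,
        fun a ha => Finset.mem_sdiff.mpr ⟨hS ha, fun hv => (Finset.mem_sdiff.mp (hV hv)).2 ha⟩⟩
    · intro F hF
      simp only [Finset.mem_filter, Finset.mem_powerset] at hF
      exact Finset.sdiff_sdiff_eq_self hF.1
    · intro V hV
      simp only [Finset.mem_powerset] at hV
      exact Finset.sdiff_sdiff_eq_self (hV.trans Finset.sdiff_subset)
    · intro F hF; rfl
  rw [hbij, sum_pow_neg_one]
  by_cases h : S = U
  · subst h; simp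
  · have h2 : U \ S ≠ ∅ := by
      rw [Ne, Finset.sdiff_eq_empty_iff_subset]
      exact fun hc => h (Finset.Subset.antisymm hS hc)
    simp [h, h2]

lemma coreA (E : Finset α) (hne : E.Nonempty) (r : Finset α → ℕ) :
    ∑ F ∈ E.powerset, (∑ S ∈ F.powerset, (-1 : ℚ) ^ S.card * 2 ^ r S) *
      (∑ T ∈ (E \ F).powerset, (-1 : ℚ) ^ T.card * ((2 : ℚ) ^ r (F ∪ T))⁻¹) = 0 := by
  have step1 : ∀ F ∈ E.powerset,
      (∑ S ∈ F.powerset, (-1 : ℚ) ^ S.card * 2 ^ r S) *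
        (∑ T ∈ (E \ F).powerset, (-1 : ℚ) ^ T.card * ((2 : ℚ) ^ r (F ∪ T))⁻¹)
      = ∑ T ∈ (E \ F).powerset, (∑ S ∈ F.powerset, (-1 : ℚ) ^ S.card * 2 ^ r S) *
          ((-1 : ℚ) ^ T.card * ((2 : ℚ) ^ r (F ∪ T))⁻¹) := fun F _ => Finset.mul_sum _ _ _
  rw [Finset.sum_congr rfl step1, swap_union E (fun F T =>
    (∑ S ∈ F.powerset, (-1 : ℚ) ^ S.card * 2 ^ r S) *
      ((-1 : ℚ) ^ T.card * ((2 : ℚ) ^ r (F ∪ T))⁻¹))]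
  have step2 : ∀ U ∈ E.powerset,
      (∑ F ∈ U.powerset, (∑ S ∈ F.powerset, (-1 : ℚ) ^ S.card * 2 ^ r S) *
        ((-1 : ℚ) ^ (U \ F).card * ((2 : ℚ) ^ r (F ∪ U \ F))⁻¹))
      = (-1 : ℚ) ^ U.card := by
    intro U hU
    have e1 : ∀ F ∈ U.powerset, (∑ S ∈ F.powerset, (-1 : ℚ) ^ S.card * 2 ^ r S) *
        ((-1 : ℚ) ^ (U \ F).card * ((2 : ℚ) ^ r (F ∪ U \ F))⁻¹)
        = ∑ S ∈ F.powerset,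
            ((-1 : ℚ) ^ S.card * 2 ^ r S * ((2 : ℚ) ^ r U)⁻¹) * (-1 : ℚ) ^ (U \ F).card := by
      intro F hF
      rw [Finset.union_sdiff_of_subset (Finset.mem_powerset.mp hF), Finset.sum_mul]
      exact Finset.sum_congr rfl fun S _ => by ring
    rw [Finset.sum_congr rfl e1]
    rw [Finset.sum_comm' (s := U.powerset) (t := fun F => F.powerset)
      (t' := U.powerset) (s' := fun S => U.powerset.filter (S ⊆ ·))
      (by
        intro F S
        simp only [Finset.mem_powerset, Finset.mem_filter]
        constructor
        · rintro ⟨h1, h2⟩; exact ⟨⟨h1, h2⟩, h2.trans h1⟩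
        · rintro ⟨⟨h1, h2⟩, h3⟩; exact ⟨h1, h2⟩)]
    have e2 : ∀ S ∈ U.powerset,
        (∑ F ∈ U.powerset.filter (S ⊆ ·),
          ((-1 : ℚ) ^ S.card * 2 ^ r S * ((2 : ℚ) ^ r U)⁻¹) * (-1 : ℚ) ^ (U \ F).card)
        = ((-1 : ℚ) ^ S.card * 2 ^ r S * ((2 : ℚ) ^ r U)⁻¹) * (if S = U then 1 else 0) := by
      intro S hS
      rw [← Finset.mul_sum, interval_sign_sum U S (Finset.mem_powerset.mp hS)]
    rw [Finset.sum_congr rfl e2]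
    rw [Finset.sum_eq_single_of_mem U (Finset.mem_powerset_self U)
      (fun b _ hb => by simp [hb])]
    have h2 : ((2 : ℚ) ^ r U) ≠ 0 := by positivity
    field_simp
    simp
  rw [Finset.sum_congr rfl step2, sum_pow_neg_one]
  simp [Finset.nonempty_iff_ne_empty.mp hne]

end CoreCombinatorics

section MatroidLemmas
open Set
open scoped Classical

variable {M : Matroid α} {S T I J F X B : Set α} {e : α} {n : ℕ}

namespace Matroid

lemma rkSet_le_of_forall (h : ∀ I, M.Indep I → I ⊆ S → I.ncard ≤ n) : M.rkSet S ≤ n :=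
  ciSup_le' fun I => h I.1 I.2.1 I.2.2


lemma ncard_le_ncard_basis' (hE : M.E.Finite) (hJ : M.IsBasis' J S) (hI : M.Indep I)
    (hIS : I ⊆ S) : I.ncard ≤ J.ncard := by
  by_contra h
  push_neg at h
  obtain ⟨e, he, hins⟩ := hJ.indep.augment hI (by
    rw [← (hE.subset hJ.indep.subset_ground).cast_ncard_eq,
      ← (hE.subset hI.subset_ground).cast_ncard_eq]
    exact_mod_cast h)
  exact hJ.insert_not_indep ⟨hIS he.1, he.2⟩ hins

lemma IsBasis'.rkSet_eq (hE : M.E.Finite) (hJ : M.IsBasis' J S) : M.rkSet S = J.ncard := by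
  refine le_antisymm (rkSet_le_of_forall fun I hI hIS => ncard_le_ncard_basis' hE hJ hI hIS) ?_
  have hbdd : BddAbove (Set.range fun I : {I : Set α // M.Indep I ∧ I ⊆ S} => I.1.ncard) :=
    ⟨J.ncard, by rintro n ⟨I, rfl⟩; exact ncard_le_ncard_basis' hE hJ I.2.1 I.2.2⟩
  exact le_ciSup hbdd ⟨J, hJ.indep, hJ.subset⟩

lemma ncard_le_rkSet (hE : M.E.Finite) (hI : M.Indep I) (hIS : I ⊆ S) :
    I.ncard ≤ M.rkSet S := by
  obtain ⟨J, hJ⟩ := M.exists_isBasis' S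
  rw [hJ.rkSet_eq hE]
  exact ncard_le_ncard_basis' hE hJ hI hIS

lemma rkSet_mono (hE : M.E.Finite) (h : S ⊆ T) : M.rkSet S ≤ M.rkSet T :=
  rkSet_le_of_forall fun I hI hIS => ncard_le_rkSet hE hI (hIS.trans h)


lemma rkSet_empty (M : Matroid α) : M.rkSet ∅ = 0 :=
  Nat.le_zero.mp (rkSet_le_of_forall fun I _ hIS => by
    simp [subset_empty_iff.mp hIS])

lemma rkSet_congr {M M' : Matroid α} {S S' : Set α}
    (h : ∀ I, (M.Indep I ∧ I ⊆ S) ↔ (M'.Indep I ∧ I ⊆ S')) : M.rkSet S = M'.rkSet S' := by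
  have hpq : (fun I => M.Indep I ∧ I ⊆ S) = fun I => M'.Indep I ∧ I ⊆ S' :=
    funext fun I => propext (h I)
  unfold rkSet
  rw [hpq]

lemma rkSet_restrict (hSF : S ⊆ F) : (M ↾ F).rkSet S = M.rkSet S :=
  rkSet_congr fun I => by
    rw [restrict_indep_iff]
    exact ⟨fun ⟨⟨h1, _⟩, h3⟩ => ⟨h1, h3⟩, fun ⟨h1, h3⟩ => ⟨⟨h1, h3.trans hSF⟩, h3⟩⟩

lemma rkSet_union_le (hE : M.E.Finite) (hT : T.Finite) :
    M.rkSet (S ∪ T) ≤ M.rkSet S + T.ncard := by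
  refine rkSet_le_of_forall fun I hI hIS => ?_
  have hIfin : I.Finite := hE.subset hI.subset_ground
  have h1 : (I ∩ T).ncard + (I \ T).ncard = I.ncard :=
    Set.ncard_inter_add_ncard_diff_eq_ncard I T hIfin
  have h2 : (I \ T).ncard ≤ M.rkSet S :=
    ncard_le_rkSet hE (hI.subset diff_subset) (fun x hx => (hIS hx.1).resolve_right hx.2)
  have h3 : (I ∩ T).ncard ≤ T.ncard := Set.ncard_le_ncard inter_subset_right hT
  omega

lemma indep_of_rkSet_eq_ncard (hE : M.E.Finite) (hS : S.Finite) (h : M.rkSet S = S.ncard) :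
    M.Indep S := by
  obtain ⟨J, hJ⟩ := M.exists_isBasis' S
  have h2 := hJ.rkSet_eq hE
  have h3 : J = S := Set.eq_of_subset_of_ncard_le hJ.subset (by omega) hS
  rw [← h3]
  exact hJ.indep

lemma rkSet_insert_of_mem_closure (hE : M.E.Finite) (hX : X ⊆ M.E) (he : e ∈ M.closure X) :
    M.rkSet (insert e X) = M.rkSet X := by
  refine le_antisymm (rkSet_le_of_forall fun I hI hIS => ?_)
    (rkSet_mono hE (subset_insert _ _))
  have hIfin : I.Finite := hE.subset hI.subset_ground
  by_cases heI : e ∈ I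
  · obtain ⟨J, hJ, hIJ⟩ := (hI.subset (diff_subset (t := {e}))).subset_isBasis'_of_subset
      (fun x hx => ((hIS hx.1).resolve_left (by simpa using hx.2)))
    have hJcard := hJ.rkSet_eq hE
    rw [hJcard]
    by_contra hlt
    push_neg at hlt
    have hIe : (I \ {e}).ncard = I.ncard - 1 := by
      rw [Set.ncard_diff (singleton_subset_iff.mpr heI)]
      simp
    have hJI : J = I \ {e} := by
      refine (Set.eq_of_subset_of_ncard_le hIJ ?_ (hE.subset hJ.indep.subset_ground)).symm
      have hpos : 1 ≤ I.ncard := Set.ncard_pos hIfin |>.mpr ⟨e, heI⟩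
      omega
    have hcl : M.closure J = M.closure X := hJ.closure_eq_closure
    exact hI.notMem_closure_diff_of_mem heI (by rw [← hJI, hcl]; exact he)
  · exact ncard_le_rkSet hE hI (fun x hx => (hIS hx).resolve_left (by rintro rfl; exact heI hx))

lemma rkSet_insert_of_not_mem_closure (hE : M.E.Finite) (hX : X ⊆ M.E)
    (he : e ∈ M.E \ M.closure X) : M.rkSet (insert e X) = M.rkSet X + 1 := by
  obtain ⟨J, hJ⟩ := M.exists_isBasis' X
  have hcl : M.closure J = M.closure X := hJ.closure_eq_closure
  have heX : e ∉ X := fun h => he.2 (M.subset_closure X hX h)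
  have heJ : e ∉ J := fun h => heX (hJ.subset h)
  have h1 : M.Indep (insert e J) := by
    rw [hJ.indep.insert_indep_iff_of_notMem heJ, hcl]
    exact he
  refine le_antisymm ?_ ?_
  · have := rkSet_union_le (M := M) (S := X) (T := {e}) hE (finite_singleton e)
    simpa [union_comm, Set.union_singleton] using this
  · have h2 : (insert e J).ncard = J.ncard + 1 :=
      Set.ncard_insert_of_notMem heJ (hE.subset hJ.indep.subset_ground)
    have h3 := ncard_le_rkSet hE h1 (insert_subset_insert hJ.subset)
    rw [hJ.rkSet_eq hE]
    omega


lemma IsBase.ncard_eq (hE : M.E.Finite) (hB : M.IsBase B) : B.ncard = M.rank :=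
  (hB.isBasis_ground.isBasis'.rkSet_eq hE).symm

lemma rkSet_le_rank (hE : M.E.Finite) (S : Set α) : M.rkSet S ≤ M.rank :=
  rkSet_le_of_forall fun I hI _ => ncard_le_rkSet hE hI hI.subset_ground

lemma dual_rkSet_add (hE : M.E.Finite) (hX : X ⊆ M.E) :
    M✶.rkSet X + M.rank = X.ncard + M.rkSet (M.E \ X) := by
  obtain ⟨J, hJ⟩ := M.exists_isBasis (M.E \ X) diff_subset
  obtain ⟨B, hB, hJB⟩ := hJ.indep.exists_isBase_superset
  have hBE := hB.subset_ground
  have hXfin := hE.subset hX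
  have hBfin := hE.subset hBE
  have hBX : J = B ∩ (M.E \ X) :=
    hJ.eq_of_subset_indep (hB.indep.subset inter_subset_left)
      (subset_inter hJB hJ.subset) inter_subset_right
  -- key : X \ B is a basis of X in the dual
  have hbasis : M✶.IsBasis (X \ B) X := by
    refine Indep.isBasis_of_forall_insert ?_ diff_subset ?_
    · rw [dual_indep_iff_exists (diff_subset.trans hX)]
      exact ⟨B, hB, disjoint_sdiff_left⟩
    · intro f hf
      rw [dep_iff, dual_ground]
      have hfX : f ∈ X := hf.1
      have hins : insert f (X \ B) ⊆ M.E := insert_subset (hX hfX) (diff_subset.trans hX)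
      refine ⟨fun hind => ?_, hins⟩
      rw [dual_indep_iff_exists hins] at hind
      obtain ⟨B', hB', hdisj⟩ := hind
      have hdj := Set.disjoint_left.mp hdisj
      have hfB : f ∈ B := by
        by_contra hfB; exact hf.2 ⟨hfX, hfB⟩
      have hsub : B' ⊆ (M.E \ X) ∪ ((B ∩ X) \ {f}) := by
        intro x hx
        have hxE : x ∈ M.E := hB'.subset_ground hx
        by_cases hxX : x ∈ X
        · have hxf : x ≠ f := by rintro rfl; exact hdj (mem_insert x _) hx
          have hxB : x ∈ B := by
            by_contra hxB; exact hdj (mem_insert_of_mem f ⟨hxX, hxB⟩) hx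
          exact Or.inr ⟨⟨hxB, hxX⟩, hxf⟩
        · exact Or.inl ⟨hxE, hxX⟩
      have hcard1 : B'.ncard = M.rank := hB'.ncard_eq hE
      have hle : B'.ncard ≤ M.rkSet ((M.E \ X) ∪ ((B ∩ X) \ {f})) :=
        ncard_le_rkSet hE hB'.indep hsub
      have hle2 : M.rkSet ((M.E \ X) ∪ ((B ∩ X) \ {f})) ≤ M.rkSet (M.E \ X)
          + ((B ∩ X) \ {f}).ncard :=
        rkSet_union_le hE ((hBfin.inter_of_left X).diff (t := {f}))
      have hJcard : M.rkSet (M.E \ X) = J.ncard := hJ.isBasis'.rkSet_eq hE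
      have hsplit : (B ∩ X).ncard + (B \ X).ncard = B.ncard :=
        Set.ncard_inter_add_ncard_diff_eq_ncard B X hBfin
      have hJeq : J.ncard = (B \ X).ncard := by
        rw [hBX]
        congr 1
        ext x
        simp only [mem_inter_iff, mem_diff]
        exact ⟨fun ⟨h1, h2, h3⟩ => ⟨h1, h3⟩, fun ⟨h1, h2⟩ => ⟨h1, hBE h1, h2⟩⟩
      have hfBX : f ∈ B ∩ X := ⟨hfB, hfX⟩
      have hcardf : ((B ∩ X) \ {f}).ncard = (B ∩ X).ncard - 1 := by
        rw [Set.ncard_diff (singleton_subset_iff.mpr hfBX)]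
        simp
      have hBcard : B.ncard = M.rank := hB.ncard_eq hE
      have hpos : 0 < (B ∩ X).ncard := Set.ncard_pos (hBfin.inter_of_left X) |>.mpr ⟨f, hfBX⟩
      omega
  have hdrk : M✶.rkSet X = (X \ B).ncard := hbasis.isBasis'.rkSet_eq (by rwa [dual_ground])
  have hsplitX : (X ∩ B).ncard + (X \ B).ncard = X.ncard :=
    Set.ncard_inter_add_ncard_diff_eq_ncard X B hXfin
  have hsplitB : (B ∩ X).ncard + (B \ X).ncard = B.ncard :=
    Set.ncard_inter_add_ncard_diff_eq_ncard B X hBfin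
  have hIeq : (X ∩ B).ncard = (B ∩ X).ncard := by rw [inter_comm]
  have hJcard : M.rkSet (M.E \ X) = J.ncard := hJ.isBasis'.rkSet_eq hE
  have hJeq : J.ncard = (B \ X).ncard := by
    rw [hBX]
    congr 1
    ext x
    simp only [mem_inter_iff, mem_diff]
    exact ⟨fun ⟨h1, h2, h3⟩ => ⟨h1, h3⟩, fun ⟨h1, h2⟩ => ⟨h1, hBE h1, h2⟩⟩
  have hBcard : B.ncard = M.rank := hB.ncard_eq hE
  omega


lemma con_ground (M : Matroid α) (F : Set α) : (M.con F).E = M.E \ F := rfl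

lemma con_rkSet_add (hE : M.E.Finite) (hF : F ⊆ M.E) (hT : T ⊆ M.E \ F) :
    (M.con F).rkSet T + M.rkSet F = M.rkSet (F ∪ T) := by
  set N : Matroid α := M✶ ↾ (M.E \ F) with hN
  have hNdef : M.con F = N✶ := rfl
  have hNE : N.E = M.E \ F := rfl
  have hNfin : N.E.Finite := hE.subset (by rw [hNE]; exact diff_subset)
  have hTE : T ⊆ M.E := hT.trans diff_subset
  -- (1) dual formula for N
  have h1 : N✶.rkSet T + N.rank = T.ncard + N.rkSet ((M.E \ F) \ T) :=
    dual_rkSet_add hNfin (by rw [hNE] at *; exact hT)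
  -- restriction facts
  have h2 : N.rkSet ((M.E \ F) \ T) = M✶.rkSet ((M.E \ F) \ T) := rkSet_restrict diff_subset
  have h2' : N.rank = M✶.rkSet (M.E \ F) := by
    have : N.rank = N.rkSet (M.E \ F) := rfl
    rw [this, rkSet_restrict subset_rfl]
  -- dual formula for M at (E\F)\T and at E\F
  have hdualE : M✶.E = M.E := rfl
  have hfin' : M✶.E.Finite := by rwa [hdualE]
  have hset1 : M.E \ ((M.E \ F) \ T) = F ∪ T := by
    ext x
    simp only [mem_diff, mem_union, not_and, not_not]
    constructor
    · rintro ⟨hxE, hx⟩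
      by_cases hxF : x ∈ F
      · exact Or.inl hxF
      · exact Or.inr (by simpa using hx ⟨hxE, hxF⟩)
    · rintro (hxF | hxT)
      · exact ⟨hF hxF, fun h => absurd hxF h.2⟩

      · exact ⟨hTE hxT, fun _ => hxT⟩
  have hset2 : M.E \ (M.E \ F) = F := by
    rw [diff_diff_cancel_left hF]
  have h3 : M✶.rkSet ((M.E \ F) \ T) + M.rank
      = ((M.E \ F) \ T).ncard + M.rkSet (F ∪ T) := by
    have := dual_rkSet_add (M := M) hE (X := (M.E \ F) \ T) (diff_subset.trans diff_subset)
    rwa [hset1] at this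
  have h4 : M✶.rkSet (M.E \ F) + M.rank = (M.E \ F).ncard + M.rkSet F := by
    have := dual_rkSet_add (M := M) hE (X := M.E \ F) diff_subset
    rwa [hset2] at this
  have h5 : T.ncard + ((M.E \ F) \ T).ncard = (M.E \ F).ncard := by
    have hfin : (M.E \ F).Finite := hE.subset diff_subset
    have := Set.ncard_inter_add_ncard_diff_eq_ncard (M.E \ F) T hfin
    rwa [Set.inter_eq_self_of_subset_right hT] at this
  have hrk1 : M✶.rkSet (M.E \ F) ≤ M✶.rkSet M.E := rkSet_mono hfin' diff_subset
  rw [hNdef]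
  omega

lemma con_rank_add (hE : M.E.Finite) (hF : F ⊆ M.E) :
    (M.con F).rank + M.rkSet F = M.rank := by
  have h := con_rkSet_add (M := M) hE hF (T := M.E \ F) subset_rfl
  rw [union_diff_cancel hF] at h
  exact h

lemma con_finite (hE : M.E.Finite) : (M.con F).E.Finite := by
  rw [con_ground]; exact hE.subset diff_subset

lemma flat_closure_self (M : Matroid α) (X : Set α) : M.IsFlat (M.closure X) := by
  have hne : {F | M.IsFlat F ∧ X ∩ M.E ⊆ F}.Nonempty := ⟨M.E, M.ground_isFlat, inter_subset_right⟩
  rw [Matroid.closure_def, sInter_eq_iInter]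
  have := hne.to_subtype
  exact IsFlat.iInter fun F => F.2.1

lemma con_isLoopless (hE : M.E.Finite) (hF : M.IsFlat F) : (M.con F).IsLoopless := by
  intro e he
  rw [con_ground] at he
  have hcl : M.closure F = F := hF.closure
  have hr : M.rkSet (insert e F) = M.rkSet F + 1 :=
    rkSet_insert_of_not_mem_closure hE hF.subset_ground (by rw [hcl]; exact ⟨he.1, he.2⟩)
  have hcon := con_rkSet_add (M := M) hE hF.subset_ground
    (T := {e}) (singleton_subset_iff.mpr he)
  rw [union_singleton, hr] at hcon
  refine indep_of_rkSet_eq_ncard (con_finite hE) (finite_singleton e) ?_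
  simp only [Set.ncard_singleton]
  omega


lemma closure_empty_eq (hM : M.IsLoopless) : M.closure ∅ = ∅ := by
  ext e
  simp only [Set.mem_empty_iff_false, iff_false]
  intro he
  have heE : e ∈ M.E := M.closure_subset_ground _ he
  have h2 := (M.empty_indep.mem_closure_iff').mp he
  simpa using h2.2 (by simpa using hM e heE)

lemma flat_empty (hM : M.IsLoopless) : M.IsFlat ∅ := by
  rw [← closure_empty_eq hM]
  exact flat_closure_self M ∅

lemma two_inv_pow (a b : ℕ) (h : b ≤ a) : (2 : ℚ) ^ a * ((1 : ℚ)/2) ^ (a - b) = 2 ^ b := by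
  rw [one_div, inv_pow]
  have h2 : ((2 : ℚ) ^ (a - b)) ≠ 0 := by positivity
  field_simp
  rw [← pow_add]
  congr 1
  omega

lemma two_pow_sub (a b : ℕ) (h : b ≤ a) : (2 : ℚ) ^ (a - b) = 2 ^ a * ((2 : ℚ) ^ b)⁻¹ := by
  have h2 : ((2 : ℚ) ^ b) ≠ 0 := by positivity
  field_simp
  rw [← pow_add]
  congr 1
  omega

lemma finsum_subsets (E0 : Set α) (hE : E0.Finite) (f : Set α → ℚ) :
    (∑ᶠ (S : Set α) (_ : S ⊆ E0), f S)
      = ∑ S ∈ hE.toFinset.powerset, f ↑S := by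
  classical
  have h1 : {S : Set α | S ⊆ E0}
      = ↑(hE.toFinset.powerset.image (fun A : Finset α => (↑A : Set α))) := by
    ext S
    simp only [Finset.coe_image, Set.mem_image, Finset.mem_coe, Finset.mem_powerset,
      Set.mem_setOf_eq]
    constructor
    · intro hS
      have hSfin : S.Finite := hE.subset hS
      refine ⟨hSfin.toFinset, ?_, by simp⟩
      intro x hx
      simp only [Set.Finite.mem_toFinset] at hx ⊢
      exact hS hx
    · rintro ⟨A, hA, rfl⟩
      intro x hx
      have := hA (by simpa using hx)
      simpa using this
  calc (∑ᶠ (S : Set α) (_ : S ⊆ E0), f S) = ∑ᶠ S ∈ {S : Set α | S ⊆ E0}, f S := rfl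
    _ = ∑ S ∈ hE.toFinset.powerset.image (fun A : Finset α => (↑A : Set α)), f S := by
        rw [h1, finsum_mem_coe_finset]
    _ = ∑ S ∈ hE.toFinset.powerset, f ↑S :=
        Finset.sum_image (fun x _ y _ h => Finset.coe_injective h)

lemma charPoly_eq_sum (hE : M.E.Finite) (t : ℚ) :
    M.charPoly t
      = ∑ S ∈ hE.toFinset.powerset, (-1 : ℚ) ^ S.card * t ^ (M.rank - M.rkSet ↑S) := by
  rw [Matroid.charPoly, finsum_subsets M.E hE _]
  exact Finset.sum_congr rfl fun S _ => by rw [Set.ncard_coe_finset]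

lemma finsum_flats (N : Matroid α) (hE : N.E.Finite) (φ : Set α → ℚ) :
    (∑ᶠ (F : Set α) (_ : N.IsFlat F ∧ F.Nonempty), φ F)
      = ∑ A ∈ hE.toFinset.powerset.filter
          (fun A : Finset α => N.IsFlat ↑A ∧ A ≠ ∅), φ ↑A := by
  classical
  have hfin : {F : Set α | N.IsFlat F ∧ F.Nonempty}.Finite :=
    hE.finite_subsets.subset (by rintro F ⟨hF, _⟩; exact hF.subset_ground)
  have himg : (hE.toFinset.powerset.filter
        (fun A : Finset α => N.IsFlat ↑A ∧ A ≠ ∅)).image (fun A : Finset α => (↑A : Set α))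
      = hfin.toFinset := by
    ext F
    simp only [Finset.mem_image, Finset.mem_filter, Finset.mem_powerset,
      Set.Finite.mem_toFinset, Set.mem_setOf_eq]
    constructor
    · rintro ⟨A, ⟨hA1, hA2, hA3⟩, rfl⟩
      refine ⟨hA2, ?_⟩
      rw [Finset.coe_nonempty]
      exact Finset.nonempty_iff_ne_empty.mpr hA3
    · rintro ⟨h1, h2⟩
      have hFfin : F.Finite := hE.subset h1.subset_ground
      refine ⟨hFfin.toFinset, ⟨?_, ?_, ?_⟩, by simp⟩
      · intro x hx
        simp only [Set.Finite.mem_toFinset] at hx ⊢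
        exact h1.subset_ground hx
      · simpa using h1
      · simp only [Ne, ← Finset.coe_empty]
        rw [← Finset.coe_inj]
        simpa using h2.ne_empty
  calc (∑ᶠ (F : Set α) (_ : N.IsFlat F ∧ F.Nonempty), φ F)
      = ∑ᶠ F ∈ {F : Set α | N.IsFlat F ∧ F.Nonempty}, φ F := rfl
    _ = ∑ F ∈ hfin.toFinset, φ F := finsum_mem_eq_finite_toFinset_sum _ hfin
    _ = ∑ A ∈ hE.toFinset.powerset.filter
          (fun A : Finset α => N.IsFlat ↑A ∧ A ≠ ∅), φ ↑A := by
        rw [← himg, Finset.sum_image (fun x _ y _ h => Finset.coe_injective h)]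


lemma cInv_restrict (hE : M.E.Finite) {A : Finset α} (hA : ↑A ⊆ M.E) :
    (M ↾ (↑A : Set α)).cInv
      = - ∑ S ∈ A.powerset, (-1 : ℚ) ^ S.card * 2 ^ (M.rkSet ↑S) := by
  have hE' : (M ↾ (↑A : Set α)).E.Finite := A.finite_toSet
  have htf : hE'.toFinset = A := by ext x; simp [Matroid.restrict_ground_eq]
  have hrank : (M ↾ (↑A : Set α)).rank = M.rkSet ↑A := rkSet_restrict subset_rfl
  rw [Matroid.cInv, charPoly_eq_sum hE', htf, neg_mul, Finset.mul_sum, neg_inj]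
  refine Finset.sum_congr rfl fun S hS => ?_
  have hSA : (↑S : Set α) ⊆ ↑A := Finset.coe_subset.mpr (Finset.mem_powerset.mp hS)
  have h1 : (M ↾ (↑A : Set α)).rkSet ↑S = M.rkSet ↑S := rkSet_restrict hSA
  have h2 : M.rkSet ↑S ≤ M.rkSet ↑A := rkSet_mono hE hSA
  rw [hrank, h1]
  calc (2:ℚ) ^ M.rkSet ↑A * ((-1) ^ S.card * (1/2) ^ (M.rkSet ↑A - M.rkSet ↑S))
      = (-1) ^ S.card * ((2:ℚ) ^ M.rkSet ↑A * (1/2) ^ (M.rkSet ↑A - M.rkSet ↑S)) := by ring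
    _ = (-1) ^ S.card * 2 ^ (M.rkSet ↑S) := by rw [two_inv_pow _ _ h2]

lemma charPoly_con_eq (hE : M.E.Finite) {A : Finset α} (hA : ↑A ⊆ M.E) :
    (M.con ↑A).charPoly 2 = 2 ^ M.rank *
      ∑ T ∈ (hE.toFinset \ A).powerset,
        (-1 : ℚ) ^ T.card * ((2 : ℚ) ^ (M.rkSet ↑(A ∪ T)))⁻¹ := by
  have hE' : (M.con (↑A : Set α)).E.Finite := con_finite hE
  rw [charPoly_eq_sum hE' 2]
  have htf : hE'.toFinset = hE.toFinset \ A := by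
    ext x
    simp [con_ground]
  rw [htf, Finset.mul_sum]
  refine Finset.sum_congr rfl fun T hT => ?_
  have hTsub : (↑T : Set α) ⊆ M.E \ ↑A := by
    intro x hx
    have := (Finset.mem_powerset.mp hT) hx
    simp only [Finset.mem_sdiff, Set.Finite.mem_toFinset] at this
    exact ⟨this.1, by simpa using this.2⟩
  have hadd := con_rkSet_add hE hA hTsub
  have hcoeU : (↑A ∪ ↑T : Set α) = ↑(A ∪ T) := by rw [Finset.coe_union]
  have hle : M.rkSet ↑(A ∪ T) ≤ M.rank := rkSet_le_rank hE _
  have hrkA : M.rkSet ↑A ≤ M.rkSet ↑(A ∪ T) := by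
    rw [← hcoeU]; exact rkSet_mono hE subset_union_left
  have hrank := con_rank_add hE hA
  rw [hcoeU] at hadd
  have hexp : (M.con ↑A).rank - (M.con ↑A).rkSet ↑T = M.rank - M.rkSet ↑(A ∪ T) := by omega
  rw [hexp, two_pow_sub _ _ hle]
  ring

lemma g_vanish (hE : M.E.Finite) {A : Finset α} (hA : ↑A ⊆ M.E) (hnf : ¬ M.IsFlat ↑A) :
    ∑ T ∈ (hE.toFinset \ A).powerset,
      (-1 : ℚ) ^ T.card * ((2 : ℚ) ^ (M.rkSet ↑(A ∪ T)))⁻¹ = 0 := by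
  have hsub : (↑A : Set α) ⊆ M.closure ↑A := M.subset_closure _ hA
  have hne : (↑A : Set α) ≠ M.closure ↑A := fun h => hnf (by rw [h]; exact flat_closure_self M ↑A)
  obtain ⟨e, hecl, heA⟩ := Set.exists_of_ssubset (hsub.ssubset_of_ne hne)
  have heE : e ∈ M.E := M.closure_subset_ground _ hecl
  have heEA : e ∈ hE.toFinset \ A := by
    simp only [Finset.mem_sdiff, Set.Finite.mem_toFinset]
    exact ⟨heE, by simpa using heA⟩
  have hsplit : hE.toFinset \ A = insert e ((hE.toFinset \ A).erase e) :=
    (Finset.insert_erase heEA).symm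
  rw [hsplit, Finset.sum_powerset_insert (Finset.notMem_erase e _), ← Finset.sum_add_distrib]
  refine Finset.sum_eq_zero fun T hT => ?_
  have hTsub := Finset.mem_powerset.mp hT
  have heT : e ∉ T := fun h => (Finset.mem_erase.mp (hTsub h)).1 rfl
  have hTE : (↑T : Set α) ⊆ M.E := by
    intro x hx
    have := hTsub hx
    have := Finset.mem_sdiff.mp (Finset.erase_subset e _ this)
    simpa using this.1
  have hrk : M.rkSet ↑(A ∪ insert e T) = M.rkSet ↑(A ∪ T) := by
    have hcoe : (↑(A ∪ insert e T) : Set α) = insert e ↑(A ∪ T) := by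
      simp only [Finset.coe_union, Finset.coe_insert]
      rw [Set.union_insert]
    rw [hcoe]
    refine rkSet_insert_of_mem_closure hE ?_ ?_
    · rw [Finset.coe_union]
      exact union_subset hA hTE
    · rw [Finset.coe_union]
      exact M.closure_subset_closure subset_union_left hecl
  rw [Finset.card_insert_of_notMem heT, hrk, pow_succ]
  ring


/-- local f -/
noncomputable def ff (M : Matroid α) (A : Finset α) : ℚ :=
  ∑ S ∈ A.powerset, (-1 : ℚ) ^ S.card * 2 ^ (M.rkSet ↑S)

/-- local g -/
noncomputable def gg (M : Matroid α) (E A : Finset α) : ℚ :=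
  ∑ T ∈ (E \ A).powerset, (-1 : ℚ) ^ T.card * ((2 : ℚ) ^ (M.rkSet ↑(A ∪ T)))⁻¹


lemma charPoly_of_empty (hE0 : M.E = ∅) (t : ℚ) : M.charPoly t = 1 := by
  have hE : M.E.Finite := hE0 ▸ Set.finite_empty
  rw [charPoly_eq_sum hE t]
  have h1 : hE.toFinset = ∅ := by simp [hE0]
  rw [h1, Finset.powerset_empty, Finset.sum_singleton]
  have h2 : M.rank = 0 := by
    rw [Matroid.rank, hE0, rkSet_empty]
  simp [h2]

lemma key (hE : M.E.Finite) (hM : M.IsLoopless) (hne : M.E.Nonempty) :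
    (∑ᶠ (F : Set α) (_ : M.IsFlat F ∧ F.Nonempty), (M ↾ F).cInv * (M.con F).charPoly 2)
      = M.charPoly 2 := by
  obtain ⟨x0, hx0⟩ := hne
  have hEne : hE.toFinset.Nonempty := ⟨x0, hE.mem_toFinset.mpr hx0⟩
  have hsubE : ∀ {A : Finset α}, A ∈ hE.toFinset.powerset → (↑A : Set α) ⊆ M.E := by
    intro A hA x hx
    have := Finset.mem_powerset.mp hA hx
    rwa [Set.Finite.mem_toFinset] at this
  rw [finsum_flats M hE]
  have hterm : ∀ A ∈ hE.toFinset.powerset.filter (fun A : Finset α => M.IsFlat ↑A ∧ A ≠ ∅),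
      (M ↾ (↑A : Set α)).cInv * (M.con ↑A).charPoly 2
        = -(2 ^ M.rank * (ff M A * gg M hE.toFinset A)) := by
    intro A hA
    have hA1 := (Finset.mem_filter.mp hA).1
    rw [cInv_restrict hE (hsubE hA1), charPoly_con_eq hE (hsubE hA1)]
    simp only [ff, gg]
    ring
  rw [Finset.sum_congr rfl hterm]
  have hall : ∑ A ∈ hE.toFinset.powerset, ff M A * gg M hE.toFinset A = 0 :=
    coreA hE.toFinset hEne (fun A => M.rkSet ↑A)
  have hzero : ∑ A ∈ hE.toFinset.powerset.filter (fun A : Finset α => ¬ M.IsFlat ↑A),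
      ff M A * gg M hE.toFinset A = 0 := by
    refine Finset.sum_eq_zero fun A hA => ?_
    have h1 := Finset.mem_filter.mp hA
    have h2 : gg M hE.toFinset A = 0 := by
      simp only [gg]
      exact g_vanish hE (hsubE h1.1) h1.2
    rw [h2, mul_zero]
  have hsplit := Finset.sum_filter_add_sum_filter_not hE.toFinset.powerset
    (fun A : Finset α => M.IsFlat ↑A) (fun A => ff M A * gg M hE.toFinset A)
  have hflat0 : ∑ A ∈ hE.toFinset.powerset.filter (fun A : Finset α => M.IsFlat ↑A),
      ff M A * gg M hE.toFinset A = 0 := by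
    rw [hzero] at hsplit
    linarith [hsplit, hall]
  have hmem : (∅ : Finset α) ∈ hE.toFinset.powerset.filter (fun A : Finset α => M.IsFlat ↑A) := by
    simp only [Finset.mem_filter, Finset.mem_powerset, Finset.coe_empty]
    exact ⟨Finset.empty_subset _, flat_empty hM⟩
  have hadd := Finset.add_sum_erase _ (fun A => ff M A * gg M hE.toFinset A) hmem
  have herase : (hE.toFinset.powerset.filter (fun A : Finset α => M.IsFlat ↑A)).erase ∅
      = hE.toFinset.powerset.filter (fun A : Finset α => M.IsFlat ↑A ∧ A ≠ ∅) := by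
    ext A
    simp only [Finset.mem_erase, Finset.mem_filter]
    tauto
  rw [herase, hflat0] at hadd
  have hf0 : ff M ∅ = 1 := by
    simp [ff, rkSet_empty]
  beta_reduce at hadd
  rw [hf0, one_mul] at hadd
  have hflats : ∑ A ∈ hE.toFinset.powerset.filter (fun A : Finset α => M.IsFlat ↑A ∧ A ≠ ∅),
      ff M A * gg M hE.toFinset A = - gg M hE.toFinset ∅ := by linarith
  have hstep : ∑ A ∈ hE.toFinset.powerset.filter (fun A : Finset α => M.IsFlat ↑A ∧ A ≠ ∅),
      -(2 ^ M.rank * (ff M A * gg M hE.toFinset A))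
      = -(2 ^ M.rank * ∑ A ∈ hE.toFinset.powerset.filter
          (fun A : Finset α => M.IsFlat ↑A ∧ A ≠ ∅), ff M A * gg M hE.toFinset A) := by
    rw [Finset.mul_sum, ← Finset.sum_neg_distrib]
  have hchar : M.charPoly 2 = 2 ^ M.rank * gg M hE.toFinset ∅ := by
    rw [charPoly_eq_sum hE 2]
    simp only [gg, Finset.sdiff_empty, Finset.empty_union]
    rw [Finset.mul_sum]
    refine Finset.sum_congr rfl fun S hS => ?_
    rw [two_pow_sub _ _ (rkSet_le_rank hE (↑S))]
    ring
  rw [hstep, hflats, hchar]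
  ring


end Matroid

end MatroidLemmas

open Set
open scoped Classical

/-- If `Eu` satisfies the recursion `Eu_∅ = 1` and
`Eu_M = ∑_{∅ ≠ F flat} c_{M^F} · Eu_{M_F}` (with `c_N = -2^(rk N) χ_N(1/2)`), then
`Eu_M = χ_M(2)` for every finite loopless matroid `M`. -/
theorem eu_eq_charPoly_two (Eu : Matroid α → ℚ)
    (h0 : Eu (Matroid.emptyOn α) = 1)
    (hrec : ∀ N : Matroid α, N.E.Finite → N.IsLoopless → N.E.Nonempty →
      Eu N = ∑ᶠ (F : Set α) (_ : N.IsFlat F ∧ F.Nonempty), (N ↾ F).cInv * Eu (N.con F)) :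
    ∀ M : Matroid α, M.E.Finite → M.IsLoopless → Eu M = M.charPoly 2 := by

  have hbase : ∀ M : Matroid α, M.E = ∅ → Eu M = M.charPoly 2 := by
    intro M hE0
    rw [Matroid.ground_eq_empty_iff.mp hE0, h0,
      Matroid.charPoly_of_empty (M := Matroid.emptyOn α) rfl 2]
  suffices H : ∀ (n : ℕ) (M : Matroid α), M.E.Finite → M.IsLoopless → M.E.ncard ≤ n →
      Eu M = M.charPoly 2 by
    intro M hE hM
    exact H M.E.ncard M hE hM le_rfl
  intro n
  induction n with
  | zero =>
    intro M hE hM hle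
    exact hbase M ((Set.ncard_eq_zero hE).mp (Nat.le_zero.mp hle))
  | succ n ih =>
    intro M hE hM hle
    rcases Set.eq_empty_or_nonempty M.E with hE0 | hne
    · exact hbase M hE0
    · rw [hrec M hE hM hne]
      have hcong : (∑ᶠ (F : Set α) (_ : M.IsFlat F ∧ F.Nonempty), (M ↾ F).cInv * Eu (M.con F))
          = ∑ᶠ (F : Set α) (_ : M.IsFlat F ∧ F.Nonempty),
              (M ↾ F).cInv * (M.con F).charPoly 2 := by
        refine finsum_congr fun F => ?_
        rw [finsum_eq_if, finsum_eq_if]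
        by_cases hF : M.IsFlat F ∧ F.Nonempty
        · rw [if_pos hF, if_pos hF]
          have hEu : Eu (M.con F) = (M.con F).charPoly 2 := by
            refine ih (M.con F) (Matroid.con_finite hE) (Matroid.con_isLoopless hE hF.1) ?_
            have hlt : (M.E \ F).ncard < M.E.ncard := by
              refine Set.ncard_lt_ncard ⟨diff_subset, fun hsub => ?_⟩ hE
              obtain ⟨x, hx⟩ := hF.2
              exact (hsub (hF.1.subset_ground hx)).2 hx
            rw [Matroid.con_ground]
            omega
          rw [hEu]
        · rw [if_neg hF, if_neg hF]
      rw [hcong, Matroid.key hE hM hne]
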